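/- Let n, α, β be real numbers and let a be a twice differentiable real-valued function on (−1,1). Then for every τ ∈ (−1,1), D_{(n,α,β)}( ((1−τ)/2)^{−α} ((1+τ)/2)^{−β} a(τ) ) = ((1−τ)/2)^{−α} ((1+τ)/2)^{−β} · (D_{(n+α+β,−α,−β)} a)(τ), where on the left-hand side the operator D_{(n,α,β)} is applied to the function τ ↦ ((1−τ)/2)^{−α} ((1+τ)/2)^{−β} a(τ). -/

import Mathlib

/-- The Jacobi differential operator
`(D_{(n,α,β)} a)(τ) = (1−τ²)a''(τ) + (β − α − (α+β+2)τ)a'(τ) + n(n+α+β+1)a(τ)`. -/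
noncomputable def jacobiD (n α β : ℝ) (a : ℝ → ℝ) (τ : ℝ) : ℝ :=
  (1 - τ ^ 2) * deriv (deriv a) τ + (β - α - (α + β + 2) * τ) * deriv a τ
    + n * (n + α + β + 1) * a τ

noncomputable def auxW (α β t : ℝ) : ℝ := ((1 - t) / 2) ^ (-α) * ((1 + t) / 2) ^ (-β)

lemma auxW_hasDerivAt (α β : ℝ) {t : ℝ} (ht : t ∈ Set.Ioo (-1 : ℝ) 1) :
    HasDerivAt (auxW α β) (auxW α β t * (α / (1 - t) - β / (1 + t))) t := by
  obtain ⟨h1, h2⟩ := ht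
  have hu : (0:ℝ) < (1 - t) / 2 := by linarith
  have hv : (0:ℝ) < (1 + t) / 2 := by linarith
  have hu' : HasDerivAt (fun t : ℝ => (1 - t) / 2) (-1 / 2) t := by
    simpa using ((hasDerivAt_id t).const_sub 1).div_const 2
  have hv' : HasDerivAt (fun t : ℝ => (1 + t) / 2) (1 / 2) t := by
    simpa using ((hasDerivAt_id t).const_add 1).div_const 2
  have hU := hu'.rpow_const (p := -α) (Or.inl hu.ne')
  have hV := hv'.rpow_const (p := -β) (Or.inl hv.ne')
  have := hU.fun_mul hV
  refine this.congr_deriv ?_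
  rw [Real.rpow_sub_one hu.ne', Real.rpow_sub_one hv.ne']
  unfold auxW
  have h1' : (1:ℝ) - t ≠ 0 := by linarith
  have h2' : (1:ℝ) + t ≠ 0 := by linarith
  have h3' : (2:ℝ) - t * 2 ≠ 0 := by intro h; apply h1'; linarith
  have h4' : (2:ℝ) + t * 2 ≠ 0 := by intro h; apply h2'; linarith
  field_simp [h3', h4']
  ring

lemma aux_g_hasDerivAt (α β : ℝ) {t : ℝ} (ht : t ∈ Set.Ioo (-1 : ℝ) 1) :
    HasDerivAt (fun t => α / (1 - t) - β / (1 + t))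
      (α / (1 - t) ^ 2 + β / (1 + t) ^ 2) t := by
  obtain ⟨h1, h2⟩ := ht
  have h1' : (1:ℝ) - t ≠ 0 := by linarith
  have h2' : (1:ℝ) + t ≠ 0 := by linarith
  have hu : HasDerivAt (fun t : ℝ => 1 - t) (-1) t := by
    simpa using (hasDerivAt_id t).const_sub 1
  have hv : HasDerivAt (fun t : ℝ => 1 + t) 1 t := by
    simpa using (hasDerivAt_id t).const_add 1
  have hA := (hasDerivAt_const t α).div hu h1'
  have hB := (hasDerivAt_const t β).div hv h2'
  have := hA.fun_sub hB
  refine this.congr_deriv ?_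
  field_simp
  ring

/-- Symmetry of the Jacobi operator:
`D_{(n,α,β)}(((1−τ)/2)^{−α} ((1+τ)/2)^{−β} a(τ))
  = ((1−τ)/2)^{−α} ((1+τ)/2)^{−β} (D_{(n+α+β,−α,−β)} a)(τ)` on `(−1,1)`. -/
theorem stmt5 (n α β : ℝ) (a : ℝ → ℝ)
    (ha : ∀ τ ∈ Set.Ioo (-1 : ℝ) 1, DifferentiableAt ℝ a τ)
    (ha' : ∀ τ ∈ Set.Ioo (-1 : ℝ) 1, DifferentiableAt ℝ (deriv a) τ) :
    ∀ τ ∈ Set.Ioo (-1 : ℝ) 1,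
      jacobiD n α β (fun t => ((1 - t) / 2) ^ (-α) * ((1 + t) / 2) ^ (-β) * a t) τ
        = ((1 - τ) / 2) ^ (-α) * ((1 + τ) / 2) ^ (-β) * jacobiD (n + α + β) (-α) (-β) a τ := by
  have hfun : (fun t => ((1 - t) / 2) ^ (-α) * ((1 + t) / 2) ^ (-β) * a t)
      = fun t => auxW α β t * a t := rfl
  intro τ hτ
  obtain ⟨h1, h2⟩ := hτ
  have hτ' : τ ∈ Set.Ioo (-1 : ℝ) 1 := ⟨h1, h2⟩
  have h1' : (1:ℝ) - τ ≠ 0 := by linarith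
  have h2' : (1:ℝ) + τ ≠ 0 := by linarith
  -- first derivative on Ioo
  have hD1 : ∀ t ∈ Set.Ioo (-1:ℝ) 1,
      deriv (fun t => auxW α β t * a t) t
        = auxW α β t * ((α / (1 - t) - β / (1 + t)) * a t + deriv a t) := by
    intro t ht
    rw [((auxW_hasDerivAt α β ht).fun_mul (ha t ht).hasDerivAt).deriv]
    ring
  have hD2 : deriv (deriv (fun t => auxW α β t * a t)) τ
      = deriv (fun t => auxW α β t * ((α / (1 - t) - β / (1 + t)) * a t + deriv a t)) τ := by
    apply Filter.EventuallyEq.deriv_eq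
    filter_upwards [isOpen_Ioo.mem_nhds hτ'] with t ht using hD1 t ht
  have hinner : HasDerivAt (fun t => (α / (1 - t) - β / (1 + t)) * a t + deriv a t)
      ((α / (1 - τ) ^ 2 + β / (1 + τ) ^ 2) * a τ
        + (α / (1 - τ) - β / (1 + τ)) * deriv a τ + deriv (deriv a) τ) τ :=
    ((aux_g_hasDerivAt α β hτ').mul (ha τ hτ').hasDerivAt).add (ha' τ hτ').hasDerivAt
  have htotal := ((auxW_hasDerivAt α β hτ').fun_mul hinner).deriv
  rw [hfun]
  show jacobiD n α β (fun t => auxW α β t * a t) τ = auxW α β τ * jacobiD (n + α + β) (-α) (-β) a τ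
  unfold jacobiD
  rw [hD2, htotal, hD1 τ hτ']
  field_simp
  ring
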